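/- Let F be a continuous strictly increasing distribution function on ℝ differentiable at its p-quantile q_p = F⁻¹(p) with F'(q_p) = f(q_p) > 0, for 0 < p < 1. Let G be a distribution function continuous at q_p, and let F_t = (1−t)F + tG. Then the quantile t ↦ F_t⁻¹(p) is differentiable at t = 0 with derivative (p − G(q_p))/f(q_p). -/

import Mathlib

/-- Influence function of the `p`-quantile: if `F` is a continuous strictly increasing
distribution function differentiable at its `p`-quantile `q` with `F'(q) = fq > 0`,
`G` is a distribution function continuous at `q`, and `Qf t` denotes the `p`-quantile
of the mixture `F_t = (1-t)F + tG`, then `t ↦ Qf t` is differentiable at `t = 0`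
(from within `[0,1]`) with derivative `(p - G q) / fq`. -/
theorem stmt10 (F G : ℝ → ℝ) (p q fq : ℝ)
    (hp : 0 < p) (hp1 : p < 1)
    (hFcont : Continuous F) (hFmono : StrictMono F)
    (hF01 : ∀ x, F x ∈ Set.Icc (0:ℝ) 1)
    (hGmono : Monotone G) (hG01 : ∀ x, G x ∈ Set.Icc (0:ℝ) 1)
    (hGq : ContinuousAt G q)
    (hFq : F q = p)
    (hderiv : HasDerivAt F fq q) (hfq : 0 < fq)
    (Qf : ℝ → ℝ) (hQf0 : Qf 0 = q)
    (hQf : ∀ t ∈ Set.Icc (0:ℝ) 1, (1 - t) * F (Qf t) + t * G (Qf t) = p) :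
    HasDerivWithinAt Qf ((p - G q) / fq) (Set.Icc (0:ℝ) 1) 0 := by
  set l := nhdsWithin (0:ℝ) (Set.Icc (0:ℝ) 1 \ {0}) with hl
  have hle : l ≤ nhds 0 := nhdsWithin_le_nhds
  have hmem : ∀ᶠ t in l, t ∈ Set.Icc (0:ℝ) 1 \ {0} := eventually_mem_nhdsWithin
  have hltev : ∀ c : ℝ, 0 < c → ∀ᶠ t : ℝ in l, t < c := by
    intro c hc
    exact (Filter.Tendsto.eventually_lt_const hc (fun ⦃U⦄ h => hle h : Filter.Tendsto id l (nhds 0)))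
  have hhalf : ∀ᶠ t in l, t < 1/2 := hltev _ (by norm_num)
  -- key algebraic identity
  have hkey : ∀ t ∈ Set.Icc (0:ℝ) 1 \ {0}, t < 1 →
      F (Qf t) - p = t / (1 - t) * (p - G (Qf t)) := by
    intro t ht ht1
    have h := hQf t ht.1
    have h1 : (1:ℝ) - t ≠ 0 := by linarith
    field_simp
    linarith [h]
  -- bound
  have hGb : ∀ x, |p - G x| ≤ 1 := by
    intro x
    have := hG01 x
    rw [abs_le]
    constructor <;> [linarith [this.2]; linarith [this.1]]
  have hEb : ∀ᶠ t in l, |F (Qf t) - p| ≤ 2 * t := by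
    filter_upwards [hmem, hhalf] with t ht ht2
    have ht0 : 0 < t := lt_of_le_of_ne ht.1.1 (fun h => ht.2 h.symm)
    have hk := hkey t ht (by linarith)
    rw [hk, abs_mul]
    have h1t : (0:ℝ) < 1 - t := by linarith
    have h1 : |t / (1 - t)| = t / (1 - t) := abs_of_nonneg (by positivity)
    have h2 : t / (1 - t) ≤ 2 * t := by
      rw [div_le_iff₀ h1t]
      nlinarith
    calc |t / (1-t)| * |p - G (Qf t)| ≤ |t / (1-t)| * 1 :=
          mul_le_mul_of_nonneg_left (hGb _) (abs_nonneg _)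
      _ = t / (1 - t) := by rw [h1, mul_one]
      _ ≤ 2 * t := h2
  -- continuity of Qf at 0 along l
  have hQlim : Filter.Tendsto Qf l (nhds q) := by
    rw [tendsto_order]
    constructor
    · intro a ha
      have hFa : F a < p := hFq ▸ hFmono ha
      filter_upwards [hEb, hltev ((p - F a)/2) (by linarith)] with t hb hlt
      by_contra hcon
      push_neg at hcon
      have : F (Qf t) ≤ F a := hFmono.monotone hcon
      have := abs_le.1 hb
      linarith
    · intro b hb
      have hFb : p < F b := hFq ▸ hFmono hb
      filter_upwards [hEb, hltev ((F b - p)/2) (by linarith)] with t h1 hlt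
      by_contra hcon
      push_neg at hcon
      have : F b ≤ F (Qf t) := hFmono.monotone hcon
      have := abs_le.1 h1
      linarith
  -- inverse slope function
  set φ : ℝ → ℝ := fun x => if x = q then fq⁻¹ else (x - q) / (F x - p) with hφdef
  have hφ : Filter.Tendsto φ (nhds q) (nhds fq⁻¹) := by
    rw [← nhdsNE_sup_pure q, Filter.tendsto_sup]
    constructor
    · have hslope : Filter.Tendsto (slope F q) (nhdsWithin q {q}ᶜ) (nhds fq) :=
        (hasDerivAt_iff_tendsto_slope).1 hderiv
      have hinv : Filter.Tendsto (fun x => (slope F q x)⁻¹) (nhdsWithin q {q}ᶜ)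
          (nhds fq⁻¹) := hslope.inv₀ (ne_of_gt hfq)
      apply hinv.congr'
      filter_upwards [eventually_mem_nhdsWithin] with x hx
      have hxq : x ≠ q := hx
      simp only [hφdef, slope_def_field, if_neg hxq, hFq, inv_div]
    · have : φ q = fq⁻¹ := by simp [hφdef]
      simpa [this] using tendsto_pure_nhds φ q
  have hr : Filter.Tendsto (fun t => φ (Qf t)) l (nhds fq⁻¹) := hφ.comp hQlim
  -- second factor
  have hs : Filter.Tendsto (fun t => (p - G (Qf t)) / (1 - t)) l (nhds (p - G q)) := by
    have hnum : Filter.Tendsto (fun t => p - G (Qf t)) l (nhds (p - G q)) :=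
      Filter.Tendsto.const_sub _ (hGq.tendsto.comp hQlim)
    have hden : Filter.Tendsto (fun t : ℝ => 1 - t) l (nhds 1) := by
      have hid : Filter.Tendsto (fun t : ℝ => t) l (nhds 0) := Filter.tendsto_id.mono_right hle
      simpa using hid.const_sub 1
    have := hnum.div hden one_ne_zero
    simpa [Pi.div_def] using this
  -- combine
  have hprod : Filter.Tendsto (fun t => φ (Qf t) * ((p - G (Qf t)) / (1 - t))) l
      (nhds ((p - G q) / fq)) := by
    have := hr.mul hs
    convert this using 2
    field_simp
  rw [hasDerivWithinAt_iff_tendsto_slope]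
  apply hprod.congr'
  filter_upwards [hmem, hhalf] with t ht ht2
  have ht0 : 0 < t := lt_of_le_of_ne ht.1.1 (fun h => ht.2 h.symm)
  have ht1 : t < 1 := by linarith
  have h1t : (1:ℝ) - t ≠ 0 := by linarith
  have hk := hkey t ht ht1
  rw [slope_def_field, hQf0]
  by_cases hq : Qf t = q
  · have hGp : p - G (Qf t) = 0 := by
      have : F (Qf t) - p = 0 := by rw [hq, hFq]; ring
      rw [this] at hk
      have htne : t / (1 - t) ≠ 0 := div_ne_zero (ne_of_gt ht0) h1t
      by_contra hc
      exact (mul_ne_zero htne hc) hk.symm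
    rw [hq] at hGp
    rw [hq, hGp]
    simp
  · have hFne : F (Qf t) - p ≠ 0 := by
      intro hc
      apply hq
      exact hFmono.injective (by linarith [hc] : F (Qf t) = F q)
    have hGne : p - G (Qf t) ≠ 0 := by
      intro hc
      rw [hc, mul_zero] at hk
      exact hFne hk
    have hk' : (1 - t) * (F (Qf t) - p) = t * (p - G (Qf t)) := by
      linear_combination hQf t ht.1
    simp only [hφdef, if_neg hq, sub_zero]
    rw [div_mul_div_comm, div_eq_div_iff (mul_ne_zero hFne h1t) (ne_of_gt ht0)]
    linear_combination (q - Qf t) * hk'
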